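/- Polynomial growth of higher-order sensitivities with respect to the temperature of the Maxwellian: fix n ≥ 0, constants τ_0 = √T* > 0 and τ_1, …, τ_{n+1} ∈ ℝ with |τ_j| ≤ C and |τ_j/√T*| ≤ C for 1 ≤ j ≤ n+1, and functions q⁽⁰⁾, …, q⁽ⁿ⁺¹⁾ on [0,∞) × ℝ × ℝ such that for each k ≤ n+1, q⁽ᵏ⁾ is a classical solution of ∂_t q⁽ᵏ⁾ + Σ_{j=0}^{k} binom(k,j) τ_{k−j} v ∂_x q⁽ʲ⁾ = L₁ q⁽ᵏ⁾, with each q⁽ᵏ⁾ and ∂_t q⁽ᵏ⁾ (k ≤ n) satisfying the energy hypotheses. Suppose moreover that for each k ≤ n there is a constant B_k with ‖q⁽ᵏ⁾(t)‖ ≤ B_k (1+t)^k and ‖∂_t q⁽ᵏ⁾(t)‖ ≤ B_k (1+t)^k for all t ≥ 0. Then there exists a constant C_{n+1}, depending only on C, n, T*, the B_k, and ‖q⁽ⁿ⁺¹⁾(0)‖, such that ‖q⁽ⁿ⁺¹⁾(t)‖ ≤ C_{n+1} (1+t)^{n+1} for all t ≥ 0. -/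

import Mathlib

open MeasureTheory Real

/-- **Energy hypotheses** for a function `w(t,x,v)` with time derivative `wt`,
spatial derivative `wx`, velocity weight `M` and transport coefficient `a(v)`:
`w` is continuously differentiable in `t` and `x`, the energy
`E(t) = ‖w(t)‖² = ∫∫ w(t,x,v)² M(v) dv dx` is finite and differentiable with
`E'(t) = 2 ∫∫ w ∂ₜw M dv dx`, and the transport term integrates to zero,
`∫∫ a(v) w ∂ₓw M dv dx = 0` (sufficient decay as `|x| → ∞`). -/
structure EnergyHyp (M : ℝ → ℝ) (a : ℝ → ℝ) (w wt wx : ℝ → ℝ → ℝ → ℝ) : Prop where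
  hasDerivAt_t : ∀ t x v, 0 ≤ t → HasDerivAt (fun s => w s x v) (wt t x v) t
  hasDerivAt_x : ∀ t x v, 0 ≤ t → HasDerivAt (fun y => w t y v) (wx t x v) x
  cont_wt : Continuous fun q : ℝ × ℝ × ℝ => wt q.1 q.2.1 q.2.2
  cont_wx : Continuous fun q : ℝ × ℝ × ℝ => wx q.1 q.2.1 q.2.2
  int_v : ∀ t x, 0 ≤ t → Integrable fun v => (w t x v) ^ 2 * M v
  int_x : ∀ t, 0 ≤ t → Integrable fun x => ∫ v, (w t x v) ^ 2 * M v
  energy_hasDerivAt : ∀ t, 0 ≤ t →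
    HasDerivAt (fun s => ∫ x, ∫ v, (w s x v) ^ 2 * M v)
      (2 * ∫ x, ∫ v, w t x v * wt t x v * M v) t
  transport_zero : ∀ t, 0 ≤ t → ∫ x, ∫ v, a v * w t x v * wx t x v * M v = 0

/-- `Pw t x ·` is the orthogonal projection `Π` of `w t x ·` onto
`span{1, v, v²}` in `L²(M dv)`: it lies in the span and the residual is
orthogonal to every quadratic polynomial. -/
def IsProjection (M : ℝ → ℝ) (w Pw : ℝ → ℝ → ℝ → ℝ) : Prop :=
  (∀ t x, ∃ a b c : ℝ, ∀ v, Pw t x v = a + b * v + c * v ^ 2) ∧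
  (∀ (t x a b c : ℝ), ∫ v, (w t x v - Pw t x v) * (a + b * v + c * v ^ 2) * M v = 0)

-- Gaussian moment integrability
lemma int_pow_gauss (k : ℕ) : Integrable fun v : ℝ => v ^ k * Real.exp (-(1/2) * v ^ 2) := by
  have hdom : Integrable fun v : ℝ =>
      Real.exp (-(1/2) * v ^ 2) + ((Nat.factorial k : ℝ) * 4 ^ k) * Real.exp (-(1/4) * v ^ 2) :=
    (integrable_exp_neg_mul_sq (by norm_num)).add
      ((integrable_exp_neg_mul_sq (by norm_num)).const_mul _)
  refine hdom.mono' (Continuous.aestronglyMeasurable (by continuity)) ?_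
  filter_upwards with v
  rw [Real.norm_eq_abs, abs_mul, abs_of_nonneg (Real.exp_nonneg _), abs_pow]
  have h1 : |v| ^ k ≤ 1 + (v ^ 2) ^ k := by
    rcases le_total |v| 1 with h | h
    · have : |v| ^ k ≤ 1 := pow_le_one₀ (abs_nonneg v) h
      nlinarith [pow_nonneg (sq_nonneg v) k]
    · have : |v| ^ k ≤ (v ^ 2) ^ k := by
        rw [← pow_mul]
        calc |v| ^ k ≤ |v| ^ (2 * k) := pow_le_pow_right₀ h (by omega)
        _ = v ^ (2*k) := by rw [← abs_pow, abs_of_nonneg (by rw [pow_mul]; positivity)]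
      linarith
  have h2 : (v ^ 2) ^ k ≤ (Nat.factorial k : ℝ) * 4 ^ k * Real.exp ((1/4) * v ^ 2) := by
    have := Real.pow_div_factorial_le_exp (x := v ^ 2 / 4) (by positivity) k
    have hk : (0:ℝ) < (Nat.factorial k : ℝ) := by exact_mod_cast Nat.factorial_pos k
    have h4 : (v ^ 2 / 4) ^ k = (v^2)^k / 4 ^ k := by rw [div_pow]
    rw [h4] at this
    have heq : v ^ 2 / 4 = (1/4) * v ^ 2 := by ring
    rw [heq] at this
    have h4k : (0:ℝ) < 4 ^ k := by positivity
    calc (v^2)^k = ((v^2)^k / 4^k / (Nat.factorial k : ℝ)) * ((Nat.factorial k : ℝ) * 4 ^ k) := by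
          field_simp
          try ring
          try tauto
    _ ≤ Real.exp ((1/4) * v^2) * ((Nat.factorial k : ℝ) * 4 ^ k) := by
        apply mul_le_mul_of_nonneg_right this (by positivity)
    _ = (Nat.factorial k : ℝ) * 4 ^ k * Real.exp ((1/4) * v ^ 2) := by ring
  calc |v| ^ k * Real.exp (-(1/2) * v ^ 2)
      ≤ (1 + (v^2)^k) * Real.exp (-(1/2) * v ^ 2) := by
        apply mul_le_mul_of_nonneg_right h1 (Real.exp_nonneg _)
    _ ≤ Real.exp (-(1/2) * v ^ 2) + ((Nat.factorial k : ℝ) * 4 ^ k * Real.exp ((1/4) * v^2)) * Real.exp (-(1/2) * v ^ 2) := by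
        nlinarith [Real.exp_nonneg (-(1/2) * v ^ 2), h2]
    _ = Real.exp (-(1/2) * v ^ 2) + ((Nat.factorial k : ℝ) * 4 ^ k) * Real.exp (-(1/4) * v ^ 2) := by
        rw [mul_assoc, ← Real.exp_add]; ring_nf

lemma int_poly_gauss {ρ : ℝ} (a b c : ℝ) {M : ℝ → ℝ}
    (hM : ∀ v, M v = ρ / Real.sqrt (2 * Real.pi) * Real.exp (-v ^ 2 / 2)) :
    Integrable fun v : ℝ => (a + b * v + c * v ^ 2) ^ 2 * M v := by
  have key : (fun v : ℝ => (a + b * v + c * v ^ 2) ^ 2 * M v) =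
      fun v => (ρ / Real.sqrt (2 * Real.pi)) *
        ((a^2) * (v ^ 0 * Real.exp (-(1/2) * v ^ 2)) + (2*a*b) * (v ^ 1 * Real.exp (-(1/2) * v ^ 2))
          + (b^2 + 2*a*c) * (v ^ 2 * Real.exp (-(1/2) * v ^ 2))
          + (2*b*c) * (v ^ 3 * Real.exp (-(1/2) * v ^ 2))
          + (c^2) * (v ^ 4 * Real.exp (-(1/2) * v ^ 2))) := by
    funext v
    rw [hM v]
    have h : -v ^ 2 / 2 = -(1/2) * v ^ 2 := by ring
    rw [h]; ring
  rw [key]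
  exact (((((int_pow_gauss 0).const_mul _).add ((int_pow_gauss 1).const_mul _)).add
    ((int_pow_gauss 2).const_mul _)).add ((int_pow_gauss 3).const_mul _)).add
    ((int_pow_gauss 4).const_mul _) |>.const_mul _

/-- product integrable -/
lemma prod_int {W f g : ℝ → ℝ} (hW : ∀ x, 0 ≤ W x)
    (hm : AEStronglyMeasurable (fun v => f v * g v * W v) volume)
    (hf : Integrable (fun v => f v ^ 2 * W v)) (hg : Integrable (fun v => g v ^ 2 * W v)) :
    Integrable (fun v => f v * g v * W v) := by
  refine ((hf.add hg).const_mul (1/2 : ℝ)).mono' hm ?_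
  filter_upwards with v
  rw [Real.norm_eq_abs, abs_mul, abs_of_nonneg (hW v)]
  have : |f v * g v| ≤ (f v ^ 2 + g v ^ 2) / 2 := by
    rw [abs_mul]; nlinarith [sq_nonneg (|f v| - |g v|), sq_abs (f v), sq_abs (g v), abs_nonneg (f v), abs_nonneg (g v)]
  calc |f v * g v| * W v ≤ (f v ^ 2 + g v ^ 2) / 2 * W v :=
        mul_le_mul_of_nonneg_right this (hW v)
    _ = 1/2 * (f v ^ 2 * W v + g v ^ 2 * W v) := by ring

/-- Cauchy-Schwarz for weighted integrals -/
lemma cs_int {W f g : ℝ → ℝ} (hW : ∀ x, 0 ≤ W x)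
    (hm : AEStronglyMeasurable (fun v => f v * g v * W v) volume)
    (hf : Integrable (fun v => f v ^ 2 * W v)) (hg : Integrable (fun v => g v ^ 2 * W v)) :
    |∫ v, f v * g v * W v| ≤
      Real.sqrt (∫ v, f v ^ 2 * W v) * Real.sqrt (∫ v, g v ^ 2 * W v) := by
  have hfg := prod_int hW hm hf hg
  set A := ∫ v, f v ^ 2 * W v with hA
  set B := ∫ v, g v ^ 2 * W v with hB
  set P := ∫ v, f v * g v * W v with hP
  have hA0 : 0 ≤ A := integral_nonneg fun v => mul_nonneg (sq_nonneg _) (hW v)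
  have hB0 : 0 ≤ B := integral_nonneg fun v => mul_nonneg (sq_nonneg _) (hW v)
  have key : ∀ l : ℝ, 0 ≤ A - 2 * l * P + l ^ 2 * B := by
    intro l
    have h1 : ∀ v, (f v - l * g v) ^ 2 * W v
        = f v ^ 2 * W v - 2 * l * (f v * g v * W v) + l ^ 2 * (g v ^ 2 * W v) := by
      intro v; ring
    have h2 : 0 ≤ ∫ v, (f v - l * g v) ^ 2 * W v :=
      integral_nonneg fun v => mul_nonneg (sq_nonneg _) (hW v)
    rw [show (fun v => (f v - l * g v) ^ 2 * W v) = fun v =>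
      f v ^ 2 * W v - 2 * l * (f v * g v * W v) + l ^ 2 * (g v ^ 2 * W v) from funext h1] at h2
    have i1 : Integrable (fun v => f v ^ 2 * W v - 2 * l * (f v * g v * W v)) volume :=
      hf.sub (hfg.const_mul _)
    have i2 : Integrable (fun v => l ^ 2 * (g v ^ 2 * W v)) volume := hg.const_mul _
    rwa [integral_add i1 i2, integral_sub hf (hfg.const_mul _), integral_const_mul,
      integral_const_mul] at h2
  have hP2 : P ^ 2 ≤ A * B := by
    rcases eq_or_lt_of_le hB0 with hB0' | hBpos
    · have hP0 : P = 0 := by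
        by_contra hne
        have h := key ((A + 1) / (2 * P))
        rw [← hB0'] at h
        have e : A - 2 * ((A + 1) / (2 * P)) * P + ((A + 1) / (2 * P)) ^ 2 * 0 = -1 := by
          field_simp; ring
        linarith [h, e]
      rw [hP0, ← hB0']; nlinarith
    · have h := key (P / B)
      have e : A - 2 * (P / B) * P + (P / B) ^ 2 * B = A - P ^ 2 / B := by
        field_simp; ring
      have h3 : P ^ 2 / B ≤ A := by linarith [h, e]
      calc P ^ 2 = P ^ 2 / B * B := by field_simp
        _ ≤ A * B := mul_le_mul_of_nonneg_right h3 hB0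
  calc |P| = Real.sqrt (P ^ 2) := by rw [Real.sqrt_sq_eq_abs]
    _ ≤ Real.sqrt (A * B) := Real.sqrt_le_sqrt hP2
    _ = Real.sqrt A * Real.sqrt B := Real.sqrt_mul hA0 _

lemma combo_sum {m : ℕ} (β : ℕ → ℝ) (Φ Wf : ℕ → ℝ → ℝ → ℝ → ℝ)
    (h : ∀ j ∈ Finset.range m, ∃ c : ℕ → ℝ, ∀ t x v : ℝ, 0 ≤ t →
      Φ j t x v = ∑ l ∈ Finset.range m, c l * Wf l t x v) :
    ∃ d : ℕ → ℝ, ∀ t x v : ℝ, 0 ≤ t →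
      ∑ j ∈ Finset.range m, β j * Φ j t x v = ∑ l ∈ Finset.range m, d l * Wf l t x v := by
  have h' : ∀ j, ∃ c : ℕ → ℝ, j ∈ Finset.range m → ∀ t x v : ℝ, 0 ≤ t →
      Φ j t x v = ∑ l ∈ Finset.range m, c l * Wf l t x v := by
    intro j
    by_cases hj : j ∈ Finset.range m
    · obtain ⟨c, hc⟩ := h j hj; exact ⟨c, fun _ => hc⟩
    · exact ⟨fun _ => 0, fun hj' => absurd hj' hj⟩
  choose cc hcc using h'
  refine ⟨fun l => ∑ j ∈ Finset.range m, β j * cc j l, fun t x v ht => ?_⟩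
  calc ∑ j ∈ Finset.range m, β j * Φ j t x v
      = ∑ j ∈ Finset.range m, ∑ l ∈ Finset.range m, β j * (cc j l * Wf l t x v) := by
        refine Finset.sum_congr rfl fun j hj => ?_
        rw [hcc j hj t x v ht, Finset.mul_sum]
    _ = ∑ l ∈ Finset.range m, ∑ j ∈ Finset.range m, β j * (cc j l * Wf l t x v) :=
        Finset.sum_comm
    _ = ∑ l ∈ Finset.range m, (∑ j ∈ Finset.range m, β j * cc j l) * Wf l t x v := by
        refine Finset.sum_congr rfl fun l _ => ?_
        rw [Finset.sum_mul]
        exact Finset.sum_congr rfl fun j _ => by ring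

lemma transport_combo (n : ℕ) (τ : ℕ → ℝ) (hτ0 : τ 0 ≠ 0) (V : ℕ → ℝ → ℝ → ℝ → ℝ) :
    ∀ j, j ≤ n → ∃ c : ℕ → ℝ, ∀ t x v : ℝ, 0 ≤ t →
      V j t x v = ∑ l ∈ Finset.range (n+1), c l *
        (∑ i ∈ Finset.range (l+1), (Nat.choose l i : ℝ) * τ (l - i) * V i t x v) := by
  intro j
  induction j using Nat.strong_induction_on with
  | _ j IH =>
    intro hj
    -- the lower-order part as a combo
    have hlow : ∃ d : ℕ → ℝ, ∀ t x v : ℝ, 0 ≤ t →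
        ∑ i ∈ Finset.range (n+1),
          (if i < j then (Nat.choose j i : ℝ) * τ (j - i) else 0) *
            (if i < j then V i t x v else 0) =
        ∑ l ∈ Finset.range (n+1), d l *
          (∑ i ∈ Finset.range (l+1), (Nat.choose l i : ℝ) * τ (l - i) * V i t x v) := by
      apply combo_sum
      intro i _
      by_cases hij : i < j
      · simp only [if_pos hij]
        exact IH i hij (le_trans (Nat.le_of_lt hij) hj)
      · exact ⟨fun _ => 0, by simp [if_neg hij]⟩
    obtain ⟨d, hd⟩ := hlow
    refine ⟨fun l => (1 / τ 0) * ((if l = j then 1 else 0) - d l), fun t x v ht => ?_⟩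
    have hsplit : ∑ i ∈ Finset.range (j+1), (Nat.choose j i : ℝ) * τ (j - i) * V i t x v
        = (∑ i ∈ Finset.range j, (Nat.choose j i : ℝ) * τ (j - i) * V i t x v)
          + τ 0 * V j t x v := by
      rw [Finset.sum_range_succ, Nat.choose_self, Nat.sub_self, Nat.cast_one, one_mul]
    have hlow2 : ∑ i ∈ Finset.range j, (Nat.choose j i : ℝ) * τ (j - i) * V i t x v
        = ∑ l ∈ Finset.range (n+1), d l *
          (∑ i ∈ Finset.range (l+1), (Nat.choose l i : ℝ) * τ (l - i) * V i t x v) := by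
      rw [← hd t x v ht]
      rw [← Finset.sum_subset (Finset.range_subset_range.mpr (by omega) :
        Finset.range j ⊆ Finset.range (n+1))]
      · refine Finset.sum_congr rfl fun i hi => ?_
        have hij : i < j := Finset.mem_range.mp hi
        simp [if_pos hij]
      · intro i _ hi
        have hij : ¬ i < j := fun hc => hi (Finset.mem_range.mpr hc)
        simp [if_neg hij]
    have hWj : ∑ i ∈ Finset.range (j+1), (Nat.choose j i : ℝ) * τ (j - i) * V i t x v
        = ∑ l ∈ Finset.range (n+1), (if l = j then (1:ℝ) else 0) *
          (∑ i ∈ Finset.range (l+1), (Nat.choose l i : ℝ) * τ (l - i) * V i t x v) := by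
      symm
      rw [Finset.sum_eq_single j]
      · simp
      · intro b _ hb; rw [if_neg hb, zero_mul]
      · intro hjm; exact absurd (Finset.mem_range.mpr (by omega : j < n + 1)) hjm
    have key : τ 0 * V j t x v
        = ∑ l ∈ Finset.range (n+1), ((if l = j then (1:ℝ) else 0) - d l) *
          (∑ i ∈ Finset.range (l+1), (Nat.choose l i : ℝ) * τ (l - i) * V i t x v) := by
      have e1 : τ 0 * V j t x v
          = (∑ i ∈ Finset.range (j+1), (Nat.choose j i : ℝ) * τ (j - i) * V i t x v)
            - ∑ i ∈ Finset.range j, (Nat.choose j i : ℝ) * τ (j - i) * V i t x v := by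
        rw [hsplit]; ring
      rw [e1, hWj, hlow2, ← Finset.sum_sub_distrib]
      exact Finset.sum_congr rfl fun l _ => by ring
    have goal : V j t x v = (1 / τ 0) * (τ 0 * V j t x v) := by field_simp
    rw [goal, key, Finset.mul_sum]
    exact Finset.sum_congr rfl fun l _ => by ring

lemma poly_gronwall (E : ℝ → ℝ) (K : ℝ) (n : ℕ) (hK : 0 ≤ K)
    (hE0 : ∀ t, 0 ≤ t → 0 ≤ E t)
    (hD : ∀ t, 0 ≤ t → ∃ D : ℝ, HasDerivAt E D t ∧ D ≤ 2 * K * (1+t)^n * Real.sqrt (E t)) :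
    ∀ t, 0 ≤ t → Real.sqrt (E t) ≤ (Real.sqrt (E 0 + 1) + K) * (1+t)^(n+1) := by
  set ψ : ℝ → ℝ := fun t => Real.sqrt (E t + 1) with hψ
  set g : ℝ → ℝ := fun t => ψ 0 + (K / (n+1)) * ((1+t)^(n+1) - 1) with hg
  set h : ℝ → ℝ := fun t => g t - ψ t with hh
  -- derivative facts
  have hψd : ∀ t, 0 ≤ t → ∃ D : ℝ, HasDerivAt ψ (D / (2 * Real.sqrt (E t + 1))) t ∧
      D ≤ 2 * K * (1+t)^n * Real.sqrt (E t) := by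
    intro t ht
    obtain ⟨D, hDeriv, hDle⟩ := hD t ht
    refine ⟨D, ?_, hDle⟩
    have h1 : HasDerivAt (fun s => E s + 1) D t := hDeriv.add_const 1
    have h2 : E t + 1 ≠ 0 := by nlinarith [hE0 t ht]
    exact h1.sqrt h2
  have hgd : ∀ t : ℝ, HasDerivAt g (K * (1+t)^n) t := by
    intro t
    have h1 : HasDerivAt (fun s : ℝ => 1 + s) 1 t := (hasDerivAt_id t).const_add 1
    have h2 : HasDerivAt (fun s : ℝ => (1+s)^(n+1)) (((n+1) : ℕ) * (1+t)^n * 1) t := h1.pow (n+1)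
    have h3 : HasDerivAt (fun s : ℝ => (1+s)^(n+1) - 1) ((n+1 : ℕ) * (1+t)^n) t := by
      simpa using h2.sub_const 1
    have h4 := h3.const_mul (K / (n+1))
    have he : (K / (n+1)) * ((n+1 : ℕ) * (1+t)^n) = K * (1+t)^n := by
      field_simp; push_cast; ring
    rw [he] at h4
    have h5 := h4.const_add (ψ 0)
    exact h5
  have hmono : MonotoneOn h (Set.Ici (0:ℝ)) := by
    apply monotoneOn_of_deriv_nonneg (convex_Ici 0)
    · intro t ht
      have ht' : (0:ℝ) ≤ t := ht
      obtain ⟨D, hd1, _⟩ := hψd t ht'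
      exact ((hgd t).sub hd1).continuousAt.continuousWithinAt
    · rw [interior_Ici]
      intro t ht
      have ht' : (0:ℝ) ≤ t := le_of_lt ht
      obtain ⟨D, hd1, _⟩ := hψd t ht'
      exact ((hgd t).sub hd1).differentiableAt.differentiableWithinAt
    · rw [interior_Ici]
      intro t ht
      have ht' : (0:ℝ) ≤ t := le_of_lt ht
      obtain ⟨D, hd1, hDle⟩ := hψd t ht'
      have hder : deriv h t = K * (1+t)^n - D / (2 * Real.sqrt (E t + 1)) :=
        ((hgd t).sub hd1).deriv
      rw [hder]
      have hs1 : 0 < Real.sqrt (E t + 1) := Real.sqrt_pos.mpr (by nlinarith [hE0 t ht'])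
      have hs2 : Real.sqrt (E t) ≤ Real.sqrt (E t + 1) := Real.sqrt_le_sqrt (by linarith)
      have hpow : (0:ℝ) ≤ (1+t)^n := by positivity
      have : D / (2 * Real.sqrt (E t + 1)) ≤ K * (1+t)^n := by
        rw [div_le_iff₀ (by positivity)]
        calc D ≤ 2 * K * (1+t)^n * Real.sqrt (E t) := hDle
          _ ≤ 2 * K * (1+t)^n * Real.sqrt (E t + 1) := by
              apply mul_le_mul_of_nonneg_left hs2 (by positivity)
          _ = K * (1+t)^n * (2 * Real.sqrt (E t + 1)) := by ring
      linarith
  intro t ht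
  have h0t := hmono (Set.self_mem_Ici) (Set.mem_Ici.mpr ht) ht
  have hh0 : h 0 = -(K / (n+1)) * ((1+(0:ℝ))^(n+1) - 1) + (g 0 - ψ 0) := by simp [hh, hg]
  have hpow1 : (1:ℝ) ≤ (1+t)^(n+1) := one_le_pow₀ (by linarith)
  have step1 : Real.sqrt (E t) ≤ ψ t := by
    simp only [hψ]; exact Real.sqrt_le_sqrt (by linarith)
  have h0e : h 0 = g 0 - ψ 0 := rfl
  have hte : h t = g t - ψ t := rfl
  have step2 : ψ t ≤ g t - h 0 := by linarith [h0t]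
  have hg0 : g 0 = ψ 0 := by simp [hg]
  have step3 : g t - h 0 = ψ 0 + (K / (n+1)) * ((1+t)^(n+1) - 1) := by
    rw [h0e, hg0]
    simp [hg]
  have step4 : (K / (n+1)) * ((1+t)^(n+1) - 1) ≤ K * (1+t)^(n+1) := by
    have hKd : K / (n+1) ≤ K := by
      apply div_le_self hK
      have : (1:ℝ) ≤ (n:ℝ) + 1 := by exact_mod_cast Nat.one_le_iff_ne_zero.mpr (by omega)
      linarith
    have h1 : (0:ℝ) ≤ (1+t)^(n+1) - 1 := by linarith
    calc (K / (n+1)) * ((1+t)^(n+1) - 1) ≤ K * ((1+t)^(n+1) - 1) :=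
          mul_le_mul_of_nonneg_right hKd h1
      _ ≤ K * (1+t)^(n+1) := by nlinarith
  have hψ0 : ψ 0 ≤ (Real.sqrt (E 0 + 1)) * (1+t)^(n+1) := by
    have : (0:ℝ) ≤ ψ 0 := Real.sqrt_nonneg _
    nlinarith
  calc Real.sqrt (E t) ≤ g t - h 0 := le_trans step1 step2
    _ = ψ 0 + (K / (n+1)) * ((1+t)^(n+1) - 1) := step3
    _ ≤ Real.sqrt (E 0 + 1) * (1+t)^(n+1) + K * (1+t)^(n+1) := by
        have := step4; have := hψ0; linarith
    _ = (Real.sqrt (E 0 + 1) + K) * (1+t)^(n+1) := by ring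


set_option maxHeartbeats 1600000 in
/-- **Polynomial growth of higher-order sensitivities w.r.t. the temperature of
the Maxwellian.**  Fix `ρ* > 0`, `T* > 0` and let `M₁(v) = (ρ*/√(2π)) exp(−v²/2)`.
Fix `n ≥ 0`, constants `τ₀ = √T* > 0` and `τ₁, …, τ_{n+1}` with `|τ_j| ≤ C` and
`|τ_j/√T*| ≤ C`, and functions `q⁽⁰⁾, …, q⁽ⁿ⁺¹⁾` such that each `q⁽ᵏ⁾`
(`k ≤ n+1`) is a classical solution of
`∂ₜq⁽ᵏ⁾ + Σ_{j=0}^{k} binom(k,j) τ_{k−j} v ∂ₓq⁽ʲ⁾ = L₁ q⁽ᵏ⁾`, with each `q⁽ᵏ⁾`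
(`k ≤ n+1`) and each `∂ₜq⁽ᵏ⁾` (`k ≤ n`) satisfying the energy hypotheses.
If moreover for each `k ≤ n` there is `B_k` with `‖q⁽ᵏ⁾(t)‖ ≤ B_k (1+t)^k` and
`‖∂ₜq⁽ᵏ⁾(t)‖ ≤ B_k (1+t)^k` for all `t ≥ 0`, then there is a constant `C_{n+1}`
with `‖q⁽ⁿ⁺¹⁾(t)‖ ≤ C_{n+1} (1+t)^{n+1}` for all `t ≥ 0`. -/
theorem polynomial_growth_higher_sensitivities_temperature
    (ρstar Tstar : ℝ) (hρ : 0 < ρstar) (hT : 0 < Tstar)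
    (M₁ : ℝ → ℝ)
    (hM₁ : ∀ v, M₁ v = ρstar / Real.sqrt (2 * Real.pi) * Real.exp (-v ^ 2 / 2))
    (n : ℕ)
    (τ : ℕ → ℝ) (C : ℝ) (hτ0 : τ 0 = Real.sqrt Tstar)
    (hτ : ∀ j, 1 ≤ j → j ≤ n + 1 → |τ j| ≤ C ∧ |τ j / Real.sqrt Tstar| ≤ C)
    (q qt qx Pq : ℕ → ℝ → ℝ → ℝ → ℝ)
    (hproj : ∀ k, k ≤ n + 1 → IsProjection M₁ (q k) (Pq k))
    (hPDE : ∀ k, k ≤ n + 1 → ∀ t x v, 0 ≤ t →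
      qt k t x v +
        ∑ j ∈ Finset.range (k + 1),
          (Nat.choose k j : ℝ) * τ (k - j) * v * qx j t x v =
        Pq k t x v - q k t x v)
    (hE : ∀ k, k ≤ n + 1 →
      EnergyHyp M₁ (fun v => Real.sqrt Tstar * v) (q k) (qt k) (qx k))
    -- each `∂ₜ q⁽ᵏ⁾`, `k ≤ n`, satisfies the energy hypotheses
    (qtt qtx : ℕ → ℝ → ℝ → ℝ → ℝ)
    (hEt : ∀ k, k ≤ n →
      EnergyHyp M₁ (fun v => Real.sqrt Tstar * v) (qt k) (qtt k) (qtx k))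
    (B : ℕ → ℝ)
    (hB : ∀ k, k ≤ n → ∀ t : ℝ, 0 ≤ t →
      Real.sqrt (∫ x, ∫ v, (q k t x v) ^ 2 * M₁ v) ≤ B k * (1 + t) ^ k ∧
      Real.sqrt (∫ x, ∫ v, (qt k t x v) ^ 2 * M₁ v) ≤ B k * (1 + t) ^ k) :
    ∃ Cn : ℝ, ∀ t : ℝ, 0 ≤ t →
      Real.sqrt (∫ x, ∫ v, (q (n + 1) t x v) ^ 2 * M₁ v) ≤
        Cn * (1 + t) ^ (n + 1) := by
  have cM : Continuous M₁ := by
    rw [show M₁ = fun v => ρstar / Real.sqrt (2 * Real.pi) * Real.exp (-v ^ 2 / 2) from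
      funext hM₁]
    exact continuous_const.mul (Real.continuous_exp.comp
      (((continuous_pow 2).neg).div_const 2))
  have hMpos : ∀ v, 0 < M₁ v := by
    intro v; rw [hM₁ v]
    have h2π : 0 < Real.sqrt (2 * Real.pi) := Real.sqrt_pos.mpr (by positivity)
    positivity
  have hMnn : ∀ v, 0 ≤ M₁ v := fun v => (hMpos v).le
  have hτ0pos : 0 < τ 0 := by rw [hτ0]; exact Real.sqrt_pos.mpr hT
  -- abbreviations
  set V : ℕ → ℝ → ℝ → ℝ → ℝ := fun i t x v => v * qx i t x v with hVdef
  set W : ℕ → ℝ → ℝ → ℝ → ℝ := fun l t x v =>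
    ∑ i ∈ Finset.range (l+1), (Nat.choose l i : ℝ) * τ (l - i) * V i t x v with hWdef
  set S : ℝ → ℝ → ℝ → ℝ := fun t x v =>
    ∑ j ∈ Finset.range (n+1), (Nat.choose (n+1) j : ℝ) * τ (n+1-j) * V j t x v with hSdef
  -- PDE in terms of W
  have hPDE' : ∀ k, k ≤ n+1 → ∀ t x v : ℝ, 0 ≤ t →
      qt k t x v + W k t x v = Pq k t x v - q k t x v := by
    intro k hk t x v ht
    have h := hPDE k hk t x v ht
    have he : W k t x v = ∑ j ∈ Finset.range (k+1),
        (Nat.choose k j : ℝ) * τ (k - j) * v * qx j t x v := by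
      simp only [hWdef, hVdef]; exact Finset.sum_congr rfl fun i _ => by ring
    rw [he]; exact h
  -- top-order PDE split
  have hPDEtop : ∀ t x v : ℝ, 0 ≤ t →
      qt (n+1) t x v = (Pq (n+1) t x v - q (n+1) t x v) - S t x v - τ 0 * V (n+1) t x v := by
    intro t x v ht
    have h := hPDE' (n+1) le_rfl t x v ht
    have hsplit : W (n+1) t x v = S t x v + τ 0 * V (n+1) t x v := by
      simp only [hWdef, hSdef]
      rw [Finset.sum_range_succ, Nat.choose_self, Nat.sub_self, Nat.cast_one, one_mul]
    rw [hsplit] at h; linarith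
  -- combination for S
  have hScombo : ∃ d : ℕ → ℝ, ∀ t x v : ℝ, 0 ≤ t →
      S t x v = ∑ l ∈ Finset.range (n+1), d l * W l t x v := by
    have hcombo := transport_combo n τ (ne_of_gt hτ0pos) V
    obtain ⟨d, hd⟩ := combo_sum (m := n+1)
      (fun j => (Nat.choose (n+1) j : ℝ) * τ (n+1-j)) V (fun l => W l)
      (by
        intro j hj
        obtain ⟨c, hc⟩ := hcombo j (by simpa using Nat.lt_succ_iff.mp (Finset.mem_range.mp hj))
        exact ⟨c, fun t x v ht => by simp only [hWdef]; exact hc t x v ht⟩)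
    exact ⟨d, fun t x v ht => by simp only [hSdef]; exact hd t x v ht⟩
  obtain ⟨d, hSd⟩ := hScombo
  -- constant
  set KS : ℝ := Real.sqrt ((n+1) * ∑ l ∈ Finset.range (n+1), (d l)^2 * (4 * (B l)^2))
    with hKSdef
  have hKSnn : 0 ≤ KS := Real.sqrt_nonneg _
  -- global continuity facts
  have hV_cont : ∀ i, i ≤ n+1 → Continuous fun p : ℝ × ℝ × ℝ => V i p.1 p.2.1 p.2.2 := by
    intro i hi
    simp only [hVdef]
    exact (continuous_snd.comp continuous_snd).mul (hE i hi).cont_wx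
  have hW_cont : ∀ l, l ≤ n+1 → Continuous fun p : ℝ × ℝ × ℝ => W l p.1 p.2.1 p.2.2 := by
    intro l hl
    simp only [hWdef]
    apply continuous_finset_sum
    intro i hi
    exact continuous_const.mul
      (hV_cont i (le_trans (Nat.lt_succ_iff.mp (Finset.mem_range.mp hi)) hl))
  have hS_cont : Continuous fun p : ℝ × ℝ × ℝ => S p.1 p.2.1 p.2.2 := by
    simp only [hSdef]
    apply continuous_finset_sum
    intro j hj
    exact continuous_const.mul (hV_cont j (by
      have := Finset.mem_range.mp hj; omega))
  -- THE KEY DERIVATIVE BOUND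
  have keybound : ∀ t : ℝ, 0 ≤ t →
      (∫ x, ∫ v, q (n+1) t x v * qt (n+1) t x v * M₁ v) ≤
        KS * (1+t)^n * Real.sqrt (∫ x, ∫ v, (q (n+1) t x v)^2 * M₁ v) := by
    intro t ht
    -- slice continuity
    have hmk : ∀ x : ℝ, Continuous fun v : ℝ => ((t, x, v) : ℝ × ℝ × ℝ) :=
      fun x => continuous_const.prodMk (continuous_const.prodMk continuous_id)
    have hmk2 : Continuous fun p : ℝ × ℝ => ((t, p.1, p.2) : ℝ × ℝ × ℝ) :=
      continuous_const.prodMk (continuous_fst.prodMk continuous_snd)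
    have cqt2 : ∀ k, k ≤ n+1 → Continuous fun p : ℝ × ℝ => qt k t p.1 p.2 :=
      fun k hk => ((hE k hk).cont_wt).comp hmk2
    have cqx2 : ∀ k, k ≤ n+1 → Continuous fun p : ℝ × ℝ => qx k t p.1 p.2 :=
      fun k hk => ((hE k hk).cont_wx).comp hmk2
    have cW2 : ∀ l, l ≤ n+1 → Continuous fun p : ℝ × ℝ => W l t p.1 p.2 :=
      fun l hl => (hW_cont l hl).comp hmk2
    have cS2 : Continuous fun p : ℝ × ℝ => S t p.1 p.2 := hS_cont.comp hmk2
    have cG2 : ∀ k, k ≤ n+1 →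
        Continuous fun p : ℝ × ℝ => Pq k t p.1 p.2 - q k t p.1 p.2 := by
      intro k hk
      have he : (fun p : ℝ × ℝ => Pq k t p.1 p.2 - q k t p.1 p.2)
          = fun p => qt k t p.1 p.2 + W k t p.1 p.2 := by
        funext p; have := hPDE' k hk t p.1 p.2 ht; linarith
      rw [he]; exact (cqt2 k hk).add (cW2 k hk)
    have cq1x : ∀ k, k ≤ n+1 → ∀ v, Continuous fun x => q k t x v := by
      intro k hk v
      rw [continuous_iff_continuousAt]
      intro x
      exact ((hE k hk).hasDerivAt_x t x v ht).differentiableAt.continuousAt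
    have cPq1x : ∀ v : ℝ, Continuous fun x => Pq (n+1) t x v := by
      intro v
      have he : (fun x => Pq (n+1) t x v) = fun x =>
          q (n+1) t x v + (Pq (n+1) t x v - q (n+1) t x v) := by funext x; ring
      rw [he]
      exact (cq1x (n+1) le_rfl v).add
        ((cG2 (n+1) le_rfl).comp (continuous_id.prodMk continuous_const))
    have cPq2 : Continuous fun p : ℝ × ℝ => Pq (n+1) t p.1 p.2 := by
      have hrep : (fun p : ℝ × ℝ => Pq (n+1) t p.1 p.2) = fun p =>
          Pq (n+1) t p.1 0 + ((Pq (n+1) t p.1 1 - Pq (n+1) t p.1 (-1))/2) * p.2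
            + ((Pq (n+1) t p.1 1 + Pq (n+1) t p.1 (-1))/2 - Pq (n+1) t p.1 0) * p.2^2 := by
        funext p
        obtain ⟨a, b, c, hPoly⟩ := (hproj (n+1) le_rfl).1 t p.1
        rw [hPoly, hPoly 0, hPoly 1, hPoly (-1)]; ring
      rw [hrep]
      refine Continuous.add (Continuous.add ?_ ?_) ?_
      · exact (cPq1x 0).comp continuous_fst
      · exact ((((cPq1x 1).comp continuous_fst).sub
          ((cPq1x (-1)).comp continuous_fst)).div_const 2).mul continuous_snd
      · exact (((((cPq1x 1).comp continuous_fst).add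
          ((cPq1x (-1)).comp continuous_fst)).div_const 2).sub
          ((cPq1x 0).comp continuous_fst)).mul (continuous_snd.pow 2)
    have cq2 : Continuous fun p : ℝ × ℝ => q (n+1) t p.1 p.2 := by
      have he : (fun p : ℝ × ℝ => q (n+1) t p.1 p.2) = fun p =>
          Pq (n+1) t p.1 p.2 - (Pq (n+1) t p.1 p.2 - q (n+1) t p.1 p.2) := by
        funext p; ring
      rw [he]; exact cPq2.sub (cG2 (n+1) le_rfl)
    -- per-x continuity in v
    have cqtv : ∀ k, k ≤ n+1 → ∀ x, Continuous fun v => qt k t x v :=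
      fun k hk x => ((hE k hk).cont_wt).comp (hmk x)
    have cWv : ∀ l, l ≤ n+1 → ∀ x, Continuous fun v => W l t x v :=
      fun l hl x => (hW_cont l hl).comp (hmk x)
    have cSv : ∀ x, Continuous fun v => S t x v := fun x => hS_cont.comp (hmk x)
    have cqv : ∀ k, k ≤ n+1 → ∀ x, Continuous fun v => q k t x v := by
      intro k hk x
      obtain ⟨a, b, c, hPoly⟩ := (hproj k hk).1 t x
      have he : (fun v => q k t x v) = fun v =>
          (a + b*v + c*v^2) - (qt k t x v + W k t x v) := by
        funext v
        have h1 := hPDE' k hk t x v ht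
        have h2 := hPoly v
        linarith
      rw [he]
      have cpoly : Continuous fun v : ℝ => a + b*v + c*v^2 :=
        (continuous_const.add (continuous_const.mul continuous_id)).add
          (continuous_const.mul (continuous_pow 2))
      exact cpoly.sub ((cqtv k hk x).add (cWv k hk x))
    have cPqv : ∀ k, k ≤ n+1 → ∀ x, Continuous fun v => Pq k t x v := by
      intro k hk x
      obtain ⟨a, b, c, hPoly⟩ := (hproj k hk).1 t x
      rw [show (fun v => Pq k t x v) = fun v => a + b*v + c*v^2 from funext hPoly]
      exact (continuous_const.add (continuous_const.mul continuous_id)).add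
        (continuous_const.mul (continuous_pow 2))
    have cGv : ∀ k, k ≤ n+1 → ∀ x, Continuous fun v => Pq k t x v - q k t x v :=
      fun k hk x => (cPqv k hk x).sub (cqv k hk x)
    -- v-integrability
    have iq : ∀ k, k ≤ n+1 → ∀ x, Integrable fun v => q k t x v ^ 2 * M₁ v :=
      fun k hk x => (hE k hk).int_v t x ht
    have iqt : ∀ l, l ≤ n → ∀ x, Integrable fun v => qt l t x v ^ 2 * M₁ v :=
      fun l hl x => (hEt l hl).int_v t x ht
    have iPq : ∀ k, k ≤ n+1 → ∀ x, Integrable fun v => Pq k t x v ^ 2 * M₁ v := by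
      intro k hk x
      obtain ⟨a, b, c, hPoly⟩ := (hproj k hk).1 t x
      rw [show (fun v => Pq k t x v ^ 2 * M₁ v) = fun v => (a + b*v + c*v^2)^2 * M₁ v from
        funext fun v => by rw [hPoly v]]
      exact int_poly_gauss a b c hM₁
    have iG : ∀ k, k ≤ n+1 → ∀ x,
        Integrable fun v => (Pq k t x v - q k t x v)^2 * M₁ v := by
      intro k hk x
      refine (((iPq k hk x).const_mul 2).add ((iq k hk x).const_mul 2)).mono'
        ((((cGv k hk x).pow 2).mul cM).aestronglyMeasurable) ?_
      filter_upwards with v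
      rw [Real.norm_eq_abs, abs_of_nonneg (mul_nonneg (sq_nonneg _) (hMnn v))]
      have h1 : (Pq k t x v - q k t x v)^2 ≤ 2 * Pq k t x v^2 + 2 * q k t x v^2 := by
        nlinarith [sq_nonneg (Pq k t x v + q k t x v)]
      calc (Pq k t x v - q k t x v)^2 * M₁ v
          ≤ (2 * Pq k t x v^2 + 2 * q k t x v^2) * M₁ v :=
            mul_le_mul_of_nonneg_right h1 (hMnn v)
        _ = 2 * (Pq k t x v^2 * M₁ v) + 2 * (q k t x v^2 * M₁ v) := by ring
    have iW : ∀ l, l ≤ n → ∀ x, Integrable fun v => W l t x v ^ 2 * M₁ v := by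
      intro l hl x
      have hl' := le_trans hl (Nat.le_succ n)
      refine (((iG l hl' x).const_mul 2).add ((iqt l hl x).const_mul 2)).mono'
        ((((cWv l hl' x).pow 2).mul cM).aestronglyMeasurable) ?_
      filter_upwards with v
      rw [Real.norm_eq_abs, abs_of_nonneg (mul_nonneg (sq_nonneg _) (hMnn v))]
      have hWe : W l t x v = (Pq l t x v - q l t x v) - qt l t x v := by
        have := hPDE' l hl' t x v ht; linarith
      have h1 : W l t x v^2 ≤ 2*(Pq l t x v - q l t x v)^2 + 2*qt l t x v^2 := by
        rw [hWe]; nlinarith [sq_nonneg ((Pq l t x v - q l t x v) + qt l t x v)]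
      calc W l t x v^2 * M₁ v
          ≤ (2*(Pq l t x v - q l t x v)^2 + 2*qt l t x v^2) * M₁ v :=
            mul_le_mul_of_nonneg_right h1 (hMnn v)
        _ = 2 * ((Pq l t x v - q l t x v)^2 * M₁ v) + 2 * (qt l t x v^2 * M₁ v) := by ring
    have hSptsq : ∀ x v, S t x v^2 ≤
        (n+1:ℝ) * ∑ l ∈ Finset.range (n+1), (d l)^2 * W l t x v^2 := by
      intro x v
      rw [hSd t x v ht]
      have h := sq_sum_le_card_mul_sum_sq (s := Finset.range (n+1))
        (f := fun l => d l * W l t x v)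
      simp only [Finset.card_range] at h
      calc (∑ l ∈ Finset.range (n+1), d l * W l t x v)^2
          ≤ ((n+1 : ℕ) : ℝ) * ∑ l ∈ Finset.range (n+1), (d l * W l t x v)^2 := h
        _ = (n+1:ℝ) * ∑ l ∈ Finset.range (n+1), (d l)^2 * W l t x v^2 := by
            push_cast
            congr 1
            exact Finset.sum_congr rfl fun l _ => by ring
    have iS : ∀ x, Integrable fun v => S t x v ^ 2 * M₁ v := by
      intro x
      have idom : Integrable fun v =>
          (n+1:ℝ) * ∑ l ∈ Finset.range (n+1), (d l)^2 * (W l t x v^2 * M₁ v) :=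
        (integrable_finset_sum _ fun l hl =>
          ((iW l (Nat.lt_succ_iff.mp (Finset.mem_range.mp hl)) x).const_mul _)).const_mul _
      refine idom.mono' (((cSv x).pow 2).mul cM).aestronglyMeasurable ?_
      filter_upwards with v
      rw [Real.norm_eq_abs, abs_of_nonneg (mul_nonneg (sq_nonneg _) (hMnn v))]
      calc S t x v^2 * M₁ v
          ≤ ((n+1:ℝ) * ∑ l ∈ Finset.range (n+1), (d l)^2 * W l t x v^2) * M₁ v :=
            mul_le_mul_of_nonneg_right (hSptsq x v) (hMnn v)
        _ = (n+1:ℝ) * ∑ l ∈ Finset.range (n+1), (d l)^2 * (W l t x v^2 * M₁ v) := by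
            rw [mul_assoc, Finset.sum_mul]
            congr 1
            exact Finset.sum_congr rfl fun l _ => by ring
    -- orthogonality and consequences
    have horth : ∀ k, k ≤ n+1 → ∀ x,
        ∫ v, (Pq k t x v - q k t x v) * Pq k t x v * M₁ v = 0 := by
      intro k hk x
      obtain ⟨a, b, c, hPoly⟩ := (hproj k hk).1 t x
      have h := (hproj k hk).2 t x a b c
      have he : (fun v => (q k t x v - Pq k t x v) * (a + b*v + c*v^2) * M₁ v)
          = fun v => -((Pq k t x v - q k t x v) * Pq k t x v * M₁ v) := by
        funext v; rw [hPoly v]; ring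
      rw [he] at h
      rw [integral_neg] at h
      linarith
    have hqGval : ∀ k, k ≤ n+1 → ∀ x,
        ∫ v, q k t x v * (Pq k t x v - q k t x v) * M₁ v
          = -(∫ v, (Pq k t x v - q k t x v)^2 * M₁ v) := by
      intro k hk x
      have hGPq_int : Integrable fun v => (Pq k t x v - q k t x v) * Pq k t x v * M₁ v :=
        prod_int hMnn (((cGv k hk x).mul (cPqv k hk x)).mul cM).aestronglyMeasurable
          (iG k hk x) (iPq k hk x)
      have he : (fun v => q k t x v * (Pq k t x v - q k t x v) * M₁ v)
          = fun v => (Pq k t x v - q k t x v) * Pq k t x v * M₁ v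
            - (Pq k t x v - q k t x v)^2 * M₁ v := by
        funext v; ring
      rw [he, integral_sub hGPq_int (iG k hk x), horth k hk x, zero_sub]
    have hγle : ∀ k, k ≤ n+1 → ∀ x,
        (∫ v, (Pq k t x v - q k t x v)^2 * M₁ v) ≤ ∫ v, q k t x v^2 * M₁ v := by
      intro k hk x
      have hγnn : 0 ≤ ∫ v, (Pq k t x v - q k t x v)^2 * M₁ v :=
        integral_nonneg fun v => mul_nonneg (sq_nonneg _) (hMnn v)
      have hAnn : 0 ≤ ∫ v, q k t x v^2 * M₁ v :=
        integral_nonneg fun v => mul_nonneg (sq_nonneg _) (hMnn v)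
      have hcs := cs_int (W := M₁) (f := fun v => q k t x v)
        (g := fun v => Pq k t x v - q k t x v) hMnn
        (((cqv k hk x).mul (cGv k hk x)).mul cM).aestronglyMeasurable
        (iq k hk x) (iG k hk x)
      rw [hqGval k hk x, abs_neg, abs_of_nonneg hγnn] at hcs
      nlinarith [Real.sq_sqrt hγnn, Real.sq_sqrt hAnn, Real.sqrt_nonneg
        (∫ v, (Pq k t x v - q k t x v)^2 * M₁ v), Real.sqrt_nonneg (∫ v, q k t x v^2 * M₁ v),
        sq_nonneg (Real.sqrt (∫ v, (Pq k t x v - q k t x v)^2 * M₁ v)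
          - Real.sqrt (∫ v, q k t x v^2 * M₁ v))]
    have hWle : ∀ l, l ≤ n → ∀ x, (∫ v, W l t x v^2 * M₁ v)
        ≤ 2*(∫ v, q l t x v^2 * M₁ v) + 2*(∫ v, qt l t x v^2 * M₁ v) := by
      intro l hl x
      have hl' := le_trans hl (Nat.le_succ n)
      have h1 : (∫ v, W l t x v^2 * M₁ v) ≤
          ∫ v, (2*((Pq l t x v - q l t x v)^2 * M₁ v) + 2*(qt l t x v^2 * M₁ v)) := by
        refine integral_mono (iW l hl x)
          (((iG l hl' x).const_mul 2).add ((iqt l hl x).const_mul 2)) ?_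
        intro v
        have hWe : W l t x v = (Pq l t x v - q l t x v) - qt l t x v := by
          have := hPDE' l hl' t x v ht; linarith
        have h2 : W l t x v^2 ≤ 2*(Pq l t x v - q l t x v)^2 + 2*qt l t x v^2 := by
          rw [hWe]; nlinarith [sq_nonneg ((Pq l t x v - q l t x v) + qt l t x v)]
        calc W l t x v^2 * M₁ v
            ≤ (2*(Pq l t x v - q l t x v)^2 + 2*qt l t x v^2) * M₁ v :=
              mul_le_mul_of_nonneg_right h2 (hMnn v)
          _ = 2*((Pq l t x v - q l t x v)^2 * M₁ v) + 2*(qt l t x v^2 * M₁ v) := by ring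
      rw [integral_add ((iG l hl' x).const_mul 2) ((iqt l hl x).const_mul 2),
        integral_const_mul, integral_const_mul] at h1
      have := hγle l hl' x
      linarith
    have hSle : ∀ x, (∫ v, S t x v^2 * M₁ v) ≤ (n+1:ℝ) * ∑ l ∈ Finset.range (n+1),
        (d l)^2 * (2*(∫ v, q l t x v^2 * M₁ v) + 2*(∫ v, qt l t x v^2 * M₁ v)) := by
      intro x
      have h1 : (∫ v, S t x v^2 * M₁ v) ≤
          ∫ v, (n+1:ℝ) * ∑ l ∈ Finset.range (n+1), (d l)^2 * (W l t x v^2 * M₁ v) := by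
        refine integral_mono (iS x) ((integrable_finset_sum _ fun l hl =>
          ((iW l (Nat.lt_succ_iff.mp (Finset.mem_range.mp hl)) x).const_mul _)).const_mul _) ?_
        intro v
        calc S t x v^2 * M₁ v
            ≤ ((n+1:ℝ) * ∑ l ∈ Finset.range (n+1), (d l)^2 * W l t x v^2) * M₁ v :=
              mul_le_mul_of_nonneg_right (hSptsq x v) (hMnn v)
          _ = (n+1:ℝ) * ∑ l ∈ Finset.range (n+1), (d l)^2 * (W l t x v^2 * M₁ v) := by
              rw [mul_assoc, Finset.sum_mul]
              congr 1
              exact Finset.sum_congr rfl fun l _ => by ring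
      rw [integral_const_mul, integral_finset_sum _ (fun l hl =>
        (iW l (Nat.lt_succ_iff.mp (Finset.mem_range.mp hl)) x).const_mul _)] at h1
      refine le_trans h1 ?_
      apply mul_le_mul_of_nonneg_left _ (by positivity : (0:ℝ) ≤ (n+1:ℝ))
      apply Finset.sum_le_sum
      intro l hl
      rw [integral_const_mul]
      exact mul_le_mul_of_nonneg_left
        (hWle l (Nat.lt_succ_iff.mp (Finset.mem_range.mp hl)) x) (sq_nonneg _)
    -- x-level integrability
    have ixq : ∀ k, k ≤ n+1 → Integrable fun x => ∫ v, q k t x v^2 * M₁ v :=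
      fun k hk => (hE k hk).int_x t ht
    have ixqt : ∀ l, l ≤ n → Integrable fun x => ∫ v, qt l t x v^2 * M₁ v :=
      fun l hl => (hEt l hl).int_x t ht
    have smS2 : AEStronglyMeasurable (fun x => ∫ v, S t x v^2 * M₁ v) volume := by
      have hc : Continuous fun p : ℝ × ℝ => S t p.1 p.2^2 * M₁ p.2 :=
        (cS2.pow 2).mul (cM.comp continuous_snd)
      exact (hc.stronglyMeasurable.integral_prod_right').aestronglyMeasurable
    have idom : Integrable fun x => (n+1:ℝ) * ∑ l ∈ Finset.range (n+1),
        (d l)^2 * (2*(∫ v, q l t x v^2 * M₁ v) + 2*(∫ v, qt l t x v^2 * M₁ v)) :=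
      (integrable_finset_sum _ fun l hl =>
        ((((ixq l (le_trans (Nat.lt_succ_iff.mp (Finset.mem_range.mp hl))
            (Nat.le_succ n))).const_mul 2).add
          ((ixqt l (Nat.lt_succ_iff.mp (Finset.mem_range.mp hl))).const_mul 2)).const_mul
            _)).const_mul _
    have ixS : Integrable fun x => ∫ v, S t x v^2 * M₁ v := by
      refine idom.mono' smS2 ?_
      filter_upwards with x
      rw [Real.norm_eq_abs, abs_of_nonneg (integral_nonneg fun v =>
        mul_nonneg (sq_nonneg _) (hMnn v))]
      exact hSle x
    -- total S bound
    have hBsq : ∀ l, l ≤ n →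
        (∫ x, ∫ v, q l t x v^2 * M₁ v) ≤ (B l)^2 * ((1+t)^l)^2 ∧
        (∫ x, ∫ v, qt l t x v^2 * M₁ v) ≤ (B l)^2 * ((1+t)^l)^2 := by
      intro l hl
      obtain ⟨h1, h2⟩ := hB l hl t ht
      have hq0 : 0 ≤ ∫ x, ∫ v, q l t x v^2 * M₁ v :=
        integral_nonneg fun x => integral_nonneg fun v => mul_nonneg (sq_nonneg _) (hMnn v)
      have hqt0 : 0 ≤ ∫ x, ∫ v, qt l t x v^2 * M₁ v :=
        integral_nonneg fun x => integral_nonneg fun v => mul_nonneg (sq_nonneg _) (hMnn v)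
      constructor
      · calc ∫ x, ∫ v, q l t x v^2 * M₁ v
            = (Real.sqrt (∫ x, ∫ v, q l t x v^2 * M₁ v))^2 := (Real.sq_sqrt hq0).symm
          _ ≤ (B l * (1+t)^l)^2 := pow_le_pow_left₀ (Real.sqrt_nonneg _) h1 2
          _ = (B l)^2 * ((1+t)^l)^2 := by ring
      · calc ∫ x, ∫ v, qt l t x v^2 * M₁ v
            = (Real.sqrt (∫ x, ∫ v, qt l t x v^2 * M₁ v))^2 := (Real.sq_sqrt hqt0).symm
          _ ≤ (B l * (1+t)^l)^2 := pow_le_pow_left₀ (Real.sqrt_nonneg _) h2 2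
          _ = (B l)^2 * ((1+t)^l)^2 := by ring
    have hStot : (∫ x, ∫ v, S t x v^2 * M₁ v) ≤ (KS * (1+t)^n)^2 := by
      have hint_l : ∀ l ∈ Finset.range (n+1), Integrable (fun x =>
          (d l)^2 * (2*(∫ v, q l t x v^2 * M₁ v) + 2*(∫ v, qt l t x v^2 * M₁ v))) volume := by
        intro l hl
        have hln : l ≤ n := Nat.lt_succ_iff.mp (Finset.mem_range.mp hl)
        exact (((ixq l (le_trans hln (Nat.le_succ n))).const_mul 2).add
          ((ixqt l hln).const_mul 2)).const_mul _
      have h1 : (∫ x, ∫ v, S t x v^2 * M₁ v) ≤ ∫ x, (n+1:ℝ) * ∑ l ∈ Finset.range (n+1),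
          (d l)^2 * (2*(∫ v, q l t x v^2 * M₁ v) + 2*(∫ v, qt l t x v^2 * M₁ v)) :=
        integral_mono ixS idom hSle
      rw [integral_const_mul, integral_finset_sum _ hint_l] at h1
      have h2 : ∀ l ∈ Finset.range (n+1),
          (∫ x, (d l)^2 * (2*(∫ v, q l t x v^2 * M₁ v) + 2*(∫ v, qt l t x v^2 * M₁ v)))
          = (d l)^2 * (2*(∫ x, ∫ v, q l t x v^2 * M₁ v)
              + 2*(∫ x, ∫ v, qt l t x v^2 * M₁ v)) := by
        intro l hl
        have hln : l ≤ n := Nat.lt_succ_iff.mp (Finset.mem_range.mp hl)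
        rw [integral_const_mul, integral_add ((ixq l (le_trans hln (Nat.le_succ n))).const_mul 2)
          ((ixqt l hln).const_mul 2), integral_const_mul, integral_const_mul]
      rw [Finset.sum_congr rfl h2] at h1
      refine le_trans h1 ?_
      have h3 : ∀ l ∈ Finset.range (n+1),
          (d l)^2 * (2*(∫ x, ∫ v, q l t x v^2 * M₁ v)
            + 2*(∫ x, ∫ v, qt l t x v^2 * M₁ v))
          ≤ ((d l)^2 * (4 * (B l)^2)) * (1+t)^(n*2) := by
        intro l hl
        have hln : l ≤ n := Nat.lt_succ_iff.mp (Finset.mem_range.mp hl)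
        obtain ⟨hbq, hbqt⟩ := hBsq l hln
        have hp : ((1+t)^l)^2 ≤ (1+t)^(n*2) := by
          rw [← pow_mul]
          exact pow_le_pow_right₀ (by linarith) (by omega)
        have hB2 : (0:ℝ) ≤ (B l)^2 := sq_nonneg _
        have hd2 : (0:ℝ) ≤ (d l)^2 := sq_nonneg _
        calc (d l)^2 * (2*(∫ x, ∫ v, q l t x v^2 * M₁ v)
              + 2*(∫ x, ∫ v, qt l t x v^2 * M₁ v))
            ≤ (d l)^2 * (4 * ((B l)^2 * ((1+t)^l)^2)) := by
              nlinarith [mul_le_mul_of_nonneg_left hbq hd2,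
                mul_le_mul_of_nonneg_left hbqt hd2]
          _ ≤ (d l)^2 * (4 * ((B l)^2 * (1+t)^(n*2))) := by
              have h5 : (B l)^2 * ((1+t)^l)^2 ≤ (B l)^2 * (1+t)^(n*2) :=
                mul_le_mul_of_nonneg_left hp hB2
              nlinarith [mul_le_mul_of_nonneg_left h5 hd2]
          _ = ((d l)^2 * (4 * (B l)^2)) * (1+t)^(n*2) := by ring
      calc (n+1:ℝ) * ∑ l ∈ Finset.range (n+1),
            (d l)^2 * (2*(∫ x, ∫ v, q l t x v^2 * M₁ v)
              + 2*(∫ x, ∫ v, qt l t x v^2 * M₁ v))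
          ≤ (n+1:ℝ) * ∑ l ∈ Finset.range (n+1), ((d l)^2 * (4 * (B l)^2)) * (1+t)^(n*2) :=
            mul_le_mul_of_nonneg_left (Finset.sum_le_sum h3) (by positivity)
        _ = ((n+1:ℝ) * ∑ l ∈ Finset.range (n+1), (d l)^2 * (4 * (B l)^2)) * (1+t)^(n*2) := by
            rw [← Finset.sum_mul]; ring
        _ = (KS * (1+t)^n)^2 := by
            have hKS2 : KS^2 = (n+1:ℝ) * ∑ l ∈ Finset.range (n+1), (d l)^2 * (4 * (B l)^2) := by
              rw [hKSdef]
              refine Real.sq_sqrt ?_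
              have : 0 ≤ ∑ l ∈ Finset.range (n+1), (d l)^2 * (4 * (B l)^2) :=
                Finset.sum_nonneg fun l _ => by positivity
              positivity
            rw [mul_pow, hKS2, ← pow_mul]
    -- pointwise identity and case analysis machinery
    have hqG_int : ∀ x, Integrable fun v =>
        q (n+1) t x v * (Pq (n+1) t x v - q (n+1) t x v) * M₁ v := fun x =>
      prod_int hMnn (((cqv (n+1) le_rfl x).mul (cGv (n+1) le_rfl x)).mul
        cM).aestronglyMeasurable (iq (n+1) le_rfl x) (iG (n+1) le_rfl x)
    have hqS_int : ∀ x, Integrable fun v => q (n+1) t x v * S t x v * M₁ v := fun x =>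
      prod_int hMnn (((cqv (n+1) le_rfl x).mul (cSv x)).mul cM).aestronglyMeasurable
        (iq (n+1) le_rfl x) (iS x)
    have hu_int : ∀ x, Integrable fun v =>
        q (n+1) t x v * (Pq (n+1) t x v - q (n+1) t x v) * M₁ v
          - q (n+1) t x v * S t x v * M₁ v := fun x => (hqG_int x).sub (hqS_int x)
    have hpoint : ∀ x v, q (n+1) t x v * qt (n+1) t x v * M₁ v =
        (q (n+1) t x v * (Pq (n+1) t x v - q (n+1) t x v) * M₁ v
          - q (n+1) t x v * S t x v * M₁ v)
        - Real.sqrt Tstar * v * q (n+1) t x v * qx (n+1) t x v * M₁ v := by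
      intro x v
      have h := hPDEtop t x v ht
      have hVe : V (n+1) t x v = v * qx (n+1) t x v := by simp only [hVdef]
      rw [h, ← hτ0, hVe]
      ring
    have hu_val : ∀ x, (∫ v, (q (n+1) t x v * (Pq (n+1) t x v - q (n+1) t x v) * M₁ v
          - q (n+1) t x v * S t x v * M₁ v))
        = -(∫ v, (Pq (n+1) t x v - q (n+1) t x v)^2 * M₁ v)
          - ∫ v, q (n+1) t x v * S t x v * M₁ v := by
      intro x
      rw [integral_sub (hqG_int x) (hqS_int x), hqGval (n+1) le_rfl x]
    have hqS_cs : ∀ x, |∫ v, q (n+1) t x v * S t x v * M₁ v| ≤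
        Real.sqrt (∫ v, q (n+1) t x v^2 * M₁ v) * Real.sqrt (∫ v, S t x v^2 * M₁ v) :=
      fun x => cs_int hMnn (((cqv (n+1) le_rfl x).mul (cSv x)).mul cM).aestronglyMeasurable
        (iq (n+1) le_rfl x) (iS x)
    have haQnn : ∀ x, 0 ≤ ∫ v, q (n+1) t x v^2 * M₁ v :=
      fun x => integral_nonneg fun v => mul_nonneg (sq_nonneg _) (hMnn v)
    have hB2nn : ∀ x, 0 ≤ ∫ v, S t x v^2 * M₁ v :=
      fun x => integral_nonneg fun v => mul_nonneg (sq_nonneg _) (hMnn v)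
    have hγnn : ∀ x, 0 ≤ ∫ v, (Pq (n+1) t x v - q (n+1) t x v)^2 * M₁ v :=
      fun x => integral_nonneg fun v => mul_nonneg (sq_nonneg _) (hMnn v)
    have hrrnn : ∀ x, 0 ≤ Real.sqrt (∫ v, q (n+1) t x v^2 * M₁ v) *
        Real.sqrt (∫ v, S t x v^2 * M₁ v) :=
      fun x => mul_nonneg (Real.sqrt_nonneg _) (Real.sqrt_nonneg _)
    have hcase : ∀ x,
        ((∫ v, q (n+1) t x v * qt (n+1) t x v * M₁ v)
          + (∫ v, Real.sqrt Tstar * v * q (n+1) t x v * qx (n+1) t x v * M₁ v)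
          = ∫ v, (q (n+1) t x v * (Pq (n+1) t x v - q (n+1) t x v) * M₁ v
              - q (n+1) t x v * S t x v * M₁ v))
        ∨ ((∫ v, q (n+1) t x v * qt (n+1) t x v * M₁ v) = 0
            ∧ (∫ v, Real.sqrt Tstar * v * q (n+1) t x v * qx (n+1) t x v * M₁ v) = 0) := by
      intro x
      by_cases hi : Integrable fun v =>
        Real.sqrt Tstar * v * q (n+1) t x v * qx (n+1) t x v * M₁ v
      · left
        have he : (fun v => q (n+1) t x v * qt (n+1) t x v * M₁ v)
            = fun v => (q (n+1) t x v * (Pq (n+1) t x v - q (n+1) t x v) * M₁ v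
              - q (n+1) t x v * S t x v * M₁ v)
              - Real.sqrt Tstar * v * q (n+1) t x v * qx (n+1) t x v * M₁ v :=
          funext fun v => hpoint x v
        rw [he, integral_sub (hu_int x) hi]
        ring
      · right
        constructor
        · apply integral_undef
          intro hcon
          apply hi
          have he : (fun v => Real.sqrt Tstar * v * q (n+1) t x v * qx (n+1) t x v * M₁ v)
              = fun v => (q (n+1) t x v * (Pq (n+1) t x v - q (n+1) t x v) * M₁ v
                - q (n+1) t x v * S t x v * M₁ v)
                - q (n+1) t x v * qt (n+1) t x v * M₁ v := by
            funext v; have := hpoint x v; linarith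
          rw [he]
          exact (hu_int x).sub hcon
        · exact integral_undef hi
    -- measurability for x-functions
    have smγ : AEStronglyMeasurable
        (fun x => ∫ v, (Pq (n+1) t x v - q (n+1) t x v)^2 * M₁ v) volume := by
      have hc : Continuous fun p : ℝ × ℝ =>
          (Pq (n+1) t p.1 p.2 - q (n+1) t p.1 p.2)^2 * M₁ p.2 :=
        ((cG2 (n+1) le_rfl).pow 2).mul (cM.comp continuous_snd)
      exact hc.stronglyMeasurable.integral_prod_right'.aestronglyMeasurable
    have smaQ : AEStronglyMeasurable (fun x => ∫ v, q (n+1) t x v^2 * M₁ v) volume :=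
      (ixq (n+1) le_rfl).aestronglyMeasurable
    have smTv : AEStronglyMeasurable
        (fun x => ∫ v, Real.sqrt Tstar * v * q (n+1) t x v * qx (n+1) t x v * M₁ v)
        volume := by
      have hc : Continuous fun p : ℝ × ℝ =>
          Real.sqrt Tstar * p.2 * q (n+1) t p.1 p.2 * qx (n+1) t p.1 p.2 * M₁ p.2 :=
        (((continuous_const.mul continuous_snd).mul cq2).mul (cqx2 (n+1) le_rfl)).mul
          (cM.comp continuous_snd)
      exact hc.stronglyMeasurable.integral_prod_right'.aestronglyMeasurable
    have smrr : AEStronglyMeasurable (fun x => Real.sqrt (∫ v, q (n+1) t x v^2 * M₁ v) *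
        Real.sqrt (∫ v, S t x v^2 * M₁ v)) volume :=
      (Real.continuous_sqrt.comp_aestronglyMeasurable smaQ).mul
        (Real.continuous_sqrt.comp_aestronglyMeasurable smS2)
    have iγ : Integrable (fun x => ∫ v, (Pq (n+1) t x v - q (n+1) t x v)^2 * M₁ v) := by
      refine (ixq (n+1) le_rfl).mono' smγ ?_
      filter_upwards with x
      rw [Real.norm_eq_abs, abs_of_nonneg (hγnn x)]
      exact hγle (n+1) le_rfl x
    have irr : Integrable (fun x => Real.sqrt (∫ v, q (n+1) t x v^2 * M₁ v) *
        Real.sqrt (∫ v, S t x v^2 * M₁ v)) := by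
      refine (((ixq (n+1) le_rfl).add ixS).const_mul (1/2 : ℝ)).mono' smrr ?_
      filter_upwards with x
      rw [Real.norm_eq_abs, abs_of_nonneg (hrrnn x)]
      simp only [Pi.add_apply]
      nlinarith [Real.sq_sqrt (haQnn x), Real.sq_sqrt (hB2nn x),
        Real.sqrt_nonneg (∫ v, q (n+1) t x v^2 * M₁ v),
        Real.sqrt_nonneg (∫ v, S t x v^2 * M₁ v),
        sq_nonneg (Real.sqrt (∫ v, q (n+1) t x v^2 * M₁ v)
          - Real.sqrt (∫ v, S t x v^2 * M₁ v))]
    -- the main x-integral bound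
    have hFvle : (∫ x, ∫ v, q (n+1) t x v * qt (n+1) t x v * M₁ v)
        ≤ ∫ x, Real.sqrt (∫ v, q (n+1) t x v^2 * M₁ v) *
            Real.sqrt (∫ v, S t x v^2 * M₁ v) := by
      by_cases hF : Integrable fun x => ∫ v, q (n+1) t x v * qt (n+1) t x v * M₁ v
      · have hZle : ∀ x, (∫ v, q (n+1) t x v * qt (n+1) t x v * M₁ v)
            + (∫ v, Real.sqrt Tstar * v * q (n+1) t x v * qx (n+1) t x v * M₁ v)
            ≤ Real.sqrt (∫ v, q (n+1) t x v^2 * M₁ v) *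
              Real.sqrt (∫ v, S t x v^2 * M₁ v) := by
          intro x
          rcases hcase x with h | ⟨h1, h2⟩
          · rw [h, hu_val x]
            have h3 := hqS_cs x
            have h4 := hγnn x
            have h5 := neg_abs_le (∫ v, q (n+1) t x v * S t x v * M₁ v)
            linarith
          · rw [h1, h2]
            simpa using hrrnn x
        have hZabs : ∀ x, |(∫ v, q (n+1) t x v * qt (n+1) t x v * M₁ v)
            + (∫ v, Real.sqrt Tstar * v * q (n+1) t x v * qx (n+1) t x v * M₁ v)|
            ≤ (∫ v, (Pq (n+1) t x v - q (n+1) t x v)^2 * M₁ v)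
              + Real.sqrt (∫ v, q (n+1) t x v^2 * M₁ v) *
                Real.sqrt (∫ v, S t x v^2 * M₁ v) := by
          intro x
          rcases hcase x with h | ⟨h1, h2⟩
          · rw [h, hu_val x]
            have h3 := hqS_cs x
            have h4 := hγnn x
            have h5 := abs_le.mp (le_refl |∫ v, q (n+1) t x v * S t x v * M₁ v|)
            rw [abs_le]
            constructor <;> nlinarith [neg_abs_le (∫ v, q (n+1) t x v * S t x v * M₁ v),
              le_abs_self (∫ v, q (n+1) t x v * S t x v * M₁ v)]
          · rw [h1, h2]
            simp only [add_zero, abs_zero]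
            have := hrrnn x
            have := hγnn x
            linarith
        have iZ : Integrable (fun x => (∫ v, q (n+1) t x v * qt (n+1) t x v * M₁ v)
            + (∫ v, Real.sqrt Tstar * v * q (n+1) t x v * qx (n+1) t x v * M₁ v)) := by
          refine (iγ.add irr).mono' (hF.aestronglyMeasurable.add smTv) ?_
          filter_upwards with x
          rw [Real.norm_eq_abs]
          exact hZabs x
        have iTv : Integrable (fun x =>
            ∫ v, Real.sqrt Tstar * v * q (n+1) t x v * qx (n+1) t x v * M₁ v) := by
          have he : (fun x => ∫ v, Real.sqrt Tstar * v * q (n+1) t x v * qx (n+1) t x v * M₁ v)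
              = fun x => ((∫ v, q (n+1) t x v * qt (n+1) t x v * M₁ v)
                + (∫ v, Real.sqrt Tstar * v * q (n+1) t x v * qx (n+1) t x v * M₁ v))
                - (∫ v, q (n+1) t x v * qt (n+1) t x v * M₁ v) := by
            funext x; ring
          rw [he]
          exact iZ.sub hF
        have hTv0 : (∫ x, ∫ v, Real.sqrt Tstar * v * q (n+1) t x v * qx (n+1) t x v * M₁ v)
            = 0 := (hE (n+1) le_rfl).transport_zero t ht
        have h1 : (∫ x, ∫ v, q (n+1) t x v * qt (n+1) t x v * M₁ v)
            = (∫ x, ((∫ v, q (n+1) t x v * qt (n+1) t x v * M₁ v)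
              + (∫ v, Real.sqrt Tstar * v * q (n+1) t x v * qx (n+1) t x v * M₁ v)))
              - ∫ x, ∫ v, Real.sqrt Tstar * v * q (n+1) t x v * qx (n+1) t x v * M₁ v := by
          rw [integral_add hF iTv]
          ring
        rw [h1, hTv0, sub_zero]
        exact integral_mono iZ irr hZle
      · rw [integral_undef hF]
        exact integral_nonneg fun x => hrrnn x
    -- Cauchy-Schwarz in x
    have hrr_cs : (∫ x, Real.sqrt (∫ v, q (n+1) t x v^2 * M₁ v) *
          Real.sqrt (∫ v, S t x v^2 * M₁ v))
        ≤ Real.sqrt (∫ x, ∫ v, q (n+1) t x v^2 * M₁ v) *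
          Real.sqrt (∫ x, ∫ v, S t x v^2 * M₁ v) := by
      have hf2 : Integrable (fun x =>
          (Real.sqrt (∫ v, q (n+1) t x v^2 * M₁ v))^2 * (1:ℝ)) := by
        have he : (fun x => (Real.sqrt (∫ v, q (n+1) t x v^2 * M₁ v))^2 * (1:ℝ))
            = fun x => ∫ v, q (n+1) t x v^2 * M₁ v := by
          funext x; rw [Real.sq_sqrt (haQnn x), mul_one]
        rw [he]; exact ixq (n+1) le_rfl
      have hg2 : Integrable (fun x => (Real.sqrt (∫ v, S t x v^2 * M₁ v))^2 * (1:ℝ)) := by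
        have he : (fun x => (Real.sqrt (∫ v, S t x v^2 * M₁ v))^2 * (1:ℝ))
            = fun x => ∫ v, S t x v^2 * M₁ v := by
          funext x; rw [Real.sq_sqrt (hB2nn x), mul_one]
        rw [he]; exact ixS
      have hm : AEStronglyMeasurable (fun x => Real.sqrt (∫ v, q (n+1) t x v^2 * M₁ v) *
          Real.sqrt (∫ v, S t x v^2 * M₁ v) * (1:ℝ)) volume := by
        simp only [mul_one]; exact smrr
      have h := cs_int (W := fun _ : ℝ => (1:ℝ))
        (f := fun x => Real.sqrt (∫ v, q (n+1) t x v^2 * M₁ v))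
        (g := fun x => Real.sqrt (∫ v, S t x v^2 * M₁ v))
        (fun _ => zero_le_one) hm hf2 hg2
      have he1 : (∫ x, (Real.sqrt (∫ v, q (n+1) t x v^2 * M₁ v))^2 * (1:ℝ))
          = ∫ x, ∫ v, q (n+1) t x v^2 * M₁ v := by
        congr 1; funext x; rw [Real.sq_sqrt (haQnn x), mul_one]
      have he2 : (∫ x, (Real.sqrt (∫ v, S t x v^2 * M₁ v))^2 * (1:ℝ))
          = ∫ x, ∫ v, S t x v^2 * M₁ v := by
        congr 1; funext x; rw [Real.sq_sqrt (hB2nn x), mul_one]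
      rw [he1, he2] at h
      simp only [mul_one] at h
      exact le_trans (le_abs_self _) h
    -- finish
    have hsqS : Real.sqrt (∫ x, ∫ v, S t x v^2 * M₁ v) ≤ KS * (1+t)^n := by
      have h := Real.sqrt_le_sqrt hStot
      rwa [Real.sqrt_sq (by positivity : (0:ℝ) ≤ KS * (1+t)^n)] at h
    calc (∫ x, ∫ v, q (n+1) t x v * qt (n+1) t x v * M₁ v)
        ≤ ∫ x, Real.sqrt (∫ v, q (n+1) t x v^2 * M₁ v) *
            Real.sqrt (∫ v, S t x v^2 * M₁ v) := hFvle
      _ ≤ Real.sqrt (∫ x, ∫ v, q (n+1) t x v^2 * M₁ v) *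
          Real.sqrt (∫ x, ∫ v, S t x v^2 * M₁ v) := hrr_cs
      _ ≤ Real.sqrt (∫ x, ∫ v, q (n+1) t x v^2 * M₁ v) * (KS * (1+t)^n) :=
          mul_le_mul_of_nonneg_left hsqS (Real.sqrt_nonneg _)
      _ = KS * (1+t)^n * Real.sqrt (∫ x, ∫ v, (q (n+1) t x v)^2 * M₁ v) := by ring


  -- Gronwall
  set Efun : ℝ → ℝ := fun s => ∫ x, ∫ v, (q (n+1) s x v)^2 * M₁ v with hEfun
  have hE0 : ∀ t, 0 ≤ t → 0 ≤ Efun t := by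
    intro t ht
    apply integral_nonneg
    intro x
    apply integral_nonneg
    intro v
    exact mul_nonneg (sq_nonneg _) (hMnn v)
  have hD : ∀ t, 0 ≤ t → ∃ D : ℝ, HasDerivAt Efun D t ∧
      D ≤ 2 * KS * (1+t)^n * Real.sqrt (Efun t) := by
    intro t ht
    refine ⟨2 * ∫ x, ∫ v, q (n+1) t x v * qt (n+1) t x v * M₁ v,
      (hE (n+1) le_rfl).energy_hasDerivAt t ht, ?_⟩
    have := keybound t ht
    simp only [hEfun]
    linarith
  have final := poly_gronwall Efun KS n hKSnn hE0 hD
  exact ⟨Real.sqrt (Efun 0 + 1) + KS, fun t ht => final t ht⟩
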